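/- If a family (q_{ij})_{i,j ∈ ℤ/Nℤ} in A satisfies the anyonic permutation relations, then the twisted conjugate matrix q̄_R with entries (q̄_R)_{ij} = ω^{-i(j-i)} q_{ij}* is unitary over A; explicitly, for all i,j ∈ ℤ/Nℤ: ∑_{k ∈ ℤ/Nℤ} ω^{k(i-j)} q_{ki} q_{kj}* = δ_{ij}·1 and ∑_{k ∈ ℤ/Nℤ} ω^{i(i-k)+j(k-j)} q_{ik}* q_{jk} = δ_{ij}·1. -/

import Mathlib

noncomputable section

/-- `ω ^ m` for `m ∈ ℤ/Nℤ`; this is well defined (independent of the chosen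
representative) as soon as `ω ^ N = 1`. -/
def wpow (N : ℕ) (ω : ℂ) (m : ZMod N) : ℂ := ω ^ m.val

/-- `z ^ m` for `m ∈ ℤ/Nℤ`; well defined when `z ^ N = 1`. -/
def apow {A : Type*} [Monoid A] (N : ℕ) (z : A) (m : ZMod N) : A := z ^ m.val

/-- The anyonic permutation relations for a family `(q i j)` indexed by `ℤ/Nℤ × ℤ/Nℤ`. -/
def AnyonicPermRel (N : ℕ) [NeZero N] (ω : ℂ) {A : Type*} [Ring A] [StarRing A]
    [Algebra ℂ A] (q : ZMod N → ZMod N → A) : Prop :=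
  (∀ i : ZMod N, q 0 i = if i = 0 then 1 else 0) ∧
  (∀ i : ZMod N, q i 0 = if i = 0 then 1 else 0) ∧
  (∀ i j : ZMod N, star (q i j) = wpow N ω (-(i * (i - j))) • q (-i) (-j)) ∧
  (∀ i j k : ZMod N, q k (i + j) =
    ∑ l : ZMod N, wpow N ω (-(l * (i - k + l))) • (q (k - l) i * q l j)) ∧
  (∀ i j k : ZMod N, q (i + j) k =
    ∑ l : ZMod N, wpow N ω (-(i * (l - j))) • (q j l * q i (k - l)))

/-- The untwisted relations for a family `(a i j)` indexed by `ℤ/Nℤ × ℤ/Nℤ`. -/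
def UntwistedRel (N : ℕ) [NeZero N] {A : Type*} [Ring A] [StarRing A]
    (a : ZMod N → ZMod N → A) : Prop :=
  (∀ i : ZMod N, a i 0 = if i = 0 then 1 else 0) ∧
  (∀ i j : ZMod N, star (a i j) = a (-i) (-j)) ∧
  (∀ i j k : ZMod N, ∑ l : ZMod N, a (k - l) i * a l j = a k (i + j)) ∧
  (∀ i j k : ZMod N, ∑ l : ZMod N, a j l * a i (k - l) = a (i + j) k)

/-- A matrix `(m i j)` over a unital `*`-algebra is unitary. -/
def IsUnitaryMatrix (N : ℕ) [NeZero N] {A : Type*} [Ring A] [StarRing A]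
    (m : ZMod N → ZMod N → A) : Prop :=
  (∀ i j : ZMod N, ∑ k : ZMod N, star (m k i) * m k j = if i = j then 1 else 0) ∧
  (∀ i j : ZMod N, ∑ k : ZMod N, m i k * star (m j k) = if i = j then 1 else 0)

/-- The twisted conjugate matrix `ū_R` with entries `ω^{-i(j-i)} u_{ij}*`. -/
def conjR (N : ℕ) (ω : ℂ) {A : Type*} [Ring A] [StarRing A] [Algebra ℂ A]
    (u : ZMod N → ZMod N → A) : ZMod N → ZMod N → A :=
  fun i j => wpow N ω (-(i * (j - i))) • star (u i j)

/-- A magic unitary: entries are projections and all rows and columns sum to `1`. -/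
def IsMagicUnitary (N : ℕ) [NeZero N] {A : Type*} [Ring A] [StarRing A]
    (u : ZMod N → ZMod N → A) : Prop :=
  (∀ i j : ZMod N, u i j * u i j = u i j) ∧
  (∀ i j : ZMod N, star (u i j) = u i j) ∧
  (∀ j : ZMod N, ∑ i : ZMod N, u i j = 1) ∧
  (∀ i : ZMod N, ∑ j : ZMod N, u i j = 1)


lemma wpow_add (N : ℕ) [NeZero N] {ω : ℂ} (h1 : ω ^ N = 1) (a b : ZMod N) :
    wpow N ω (a + b) = wpow N ω a * wpow N ω b := by
  unfold wpow
  rw [← pow_add, ZMod.val_add]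
  conv_rhs => rw [← Nat.mod_add_div (a.val + b.val) N]
  rw [pow_add, pow_mul, h1, one_pow, mul_one]

lemma wpow_zero (N : ℕ) [NeZero N] (ω : ℂ) : wpow N ω 0 = 1 := by
  simp [wpow, ZMod.val_zero]

lemma wpow_neg_mul (N : ℕ) [NeZero N] {ω : ℂ} (h1 : ω ^ N = 1) (m : ZMod N) :
    wpow N ω (-m) * wpow N ω m = 1 := by
  rw [← wpow_add N h1, neg_add_cancel, wpow_zero]

lemma wpow_ne_zero (N : ℕ) [NeZero N] {ω : ℂ} (h1 : ω ^ N = 1) (m : ZMod N) :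
    wpow N ω m ≠ 0 := by
  intro h
  have := wpow_neg_mul N h1 m
  rw [h, mul_zero] at this
  exact zero_ne_one this

lemma star_wpow (N : ℕ) [NeZero N] {ω : ℂ} (h1 : ω ^ N = 1) (m : ZMod N) :
    star (wpow N ω m) = wpow N ω (-m) := by
  have hn : ‖wpow N ω m‖ = 1 := by
    have : (wpow N ω m) ^ N = 1 := by
      rw [wpow, ← pow_mul, mul_comm, pow_mul, h1, one_pow]
    exact Complex.norm_eq_one_of_pow_eq_one this (NeZero.ne N)
  have h2 : (wpow N ω m)⁻¹ = star (wpow N ω m) := Complex.inv_eq_conj hn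
  rw [← h2]
  field_simp [wpow_ne_zero N h1 m]
  rw [mul_comm, wpow_neg_mul N h1 m]

theorem stmt_3 (N : ℕ) [NeZero N] (hN : 2 ≤ N) (ω : ℂ) (hω : IsPrimitiveRoot ω N)
    {A : Type*} [NormedRing A] [StarRing A] [CStarRing A]
    [NormedAlgebra ℂ A] [CompleteSpace A] [StarModule ℂ A]
    (q : ZMod N → ZMod N → A) (hq : AnyonicPermRel N ω q) :
    IsUnitaryMatrix N (conjR N ω q) ∧
    (∀ i j : ZMod N,
      ∑ k : ZMod N, wpow N ω (k * (i - j)) • (q k i * star (q k j)) =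
        if i = j then 1 else 0) ∧
    (∀ i j : ZMod N,
      ∑ k : ZMod N, wpow N ω (i * (i - k) + j * (k - j)) • (star (q i k) * q j k) =
        if i = j then 1 else 0) := by
  obtain ⟨hrow0, hcol0, hstar, h3, h4⟩ := hq
  have h1 : ω ^ N = 1 := hω.pow_eq_one
  -- notation
  set w : ZMod N → ℂ := wpow N ω with hw
  have hwmul : ∀ a b : ZMod N, w a * w b = w (a + b) := fun a b => (wpow_add N h1 a b).symm
  have hw0 : w 0 = 1 := wpow_zero N ω
  -- q (-i) (-j) in terms of star (q i j)
  have hq_neg : ∀ i j : ZMod N, q (-i) (-j) = w (i * (i - j)) • star (q i j) := by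
    intro i j
    rw [hstar i j, smul_smul, hwmul, add_neg_cancel, hw0, one_smul]
  -- q i j in terms of star (q (-i) (-j))
  have hq_star : ∀ i j : ZMod N, q i j = w (i * (i - j)) • star (q (-i) (-j)) := by
    intro i j
    conv_lhs => rw [← star_star (q i j), hstar i j, star_smul, star_wpow N h1, neg_neg]
  -- untwisted row orthogonality
  have R1 : ∀ i j : ZMod N,
      (∑ l : ZMod N, q j l * star (q i l)) = if i = j then 1 else 0 := by
    intro i j
    have h := h4 (-i) j 0
    rw [hcol0 (-i + j)] at h
    have hterm : ∀ l : ZMod N,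
        w (-(-i * (l - j))) • (q j l * q (-i) (0 - l)) =
          w (i * (i - j)) • (q j l * star (q i l)) := by
      intro l
      rw [zero_sub, hq_neg i l, mul_smul_comm, smul_smul, hwmul]
      congr 2
      ring
    rw [Finset.sum_congr rfl (fun l _ => hterm l), ← Finset.smul_sum] at h
    have := congrArg (fun x => w (-(i * (i - j))) • x) h
    simp only [smul_smul, hwmul, neg_add_cancel, hw0, one_smul] at this
    rw [← this]
    by_cases hij : i = j
    · simp [hij, hw0]
    · have : ¬(-i + j = 0) := by
        intro h'
        exact hij (by linear_combination -h')
      simp [this, hij]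
  -- second bullet
  have B2 : ∀ i j : ZMod N,
      ∑ k : ZMod N, w (k * (i - j)) • (q k i * star (q k j)) = if i = j then 1 else 0 := by
    intro i j
    have h := h3 i (-j) 0
    rw [hrow0 (i + -j)] at h
    have hterm : ∀ l : ZMod N,
        w (-(l * (i - 0 + l))) • (q (0 - l) i * q l (-j)) =
          w (-l * (i - j)) • (q (-l) i * star (q (-l) j)) := by
      intro l
      have hn := hq_neg (-l) j
      rw [neg_neg] at hn
      rw [zero_sub, hn, mul_smul_comm, smul_smul, hwmul]
      congr 2
      ring
    rw [Finset.sum_congr rfl (fun l _ => hterm l)] at h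
    simp only [← sub_eq_add_neg, sub_eq_zero] at h
    rw [Fintype.sum_equiv (Equiv.neg (ZMod N))
      (fun k => w (k * (i - j)) • (q k i * star (q k j)))
      (fun l => w (-l * (i - j)) • (q (-l) i * star (q (-l) j)))
      (fun k => by simp), ← h]
  -- third bullet
  have B3 : ∀ i j : ZMod N,
      ∑ k : ZMod N, w (i * (i - k) + j * (k - j)) • (star (q i k) * q j k) =
        if i = j then 1 else 0 := by
    intro i j
    have hterm : ∀ k : ZMod N,
        w (i * (i - k) + j * (k - j)) • (star (q i k) * q j k) =
          q (-i) (-k) * star (q (-j) (-k)) := by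
      intro k
      rw [hstar i k, hq_star j k, smul_mul_smul_comm, smul_smul, hwmul, hwmul]
      have he : i * (i - k) + j * (k - j) + (-(i * (i - k)) + j * (j - k)) = 0 := by ring
      rw [he, hw0, one_smul]
    rw [Finset.sum_congr rfl (fun k _ => hterm k)]
    rw [Fintype.sum_equiv (Equiv.neg (ZMod N))
      (fun k => q (-i) (-k) * star (q (-j) (-k)))
      (fun m => q (-i) m * star (q (-j) m))
      (fun k => by simp), R1 (-j) (-i)]
    simp [neg_inj, eq_comm]
  -- assembling
  refine ⟨⟨?_, ?_⟩, B2, B3⟩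
  · intro i j
    have hterm : ∀ k : ZMod N,
        star (conjR N ω q k i) * conjR N ω q k j =
          w (k * (i - j)) • (q k i * star (q k j)) := by
      intro k
      simp only [conjR]
      rw [star_smul, star_star, star_wpow N h1, neg_neg, smul_mul_smul_comm, hwmul]
      congr 2
      ring
    rw [Finset.sum_congr rfl (fun k _ => hterm k), B2 i j]
  · intro i j
    have hterm : ∀ k : ZMod N,
        conjR N ω q i k * star (conjR N ω q j k) =
          w (i * (i - k) + j * (k - j)) • (star (q i k) * q j k) := by
      intro k
      simp only [conjR]
      rw [star_smul, star_star, star_wpow N h1, neg_neg, smul_mul_smul_comm, hwmul]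
      congr 2
      ring
    rw [Finset.sum_congr rfl (fun k _ => hterm k), B3 i j]
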